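/- Let A ≤ B ≤ M be submodules of a torsion-free R-module M with A an RD*-submodule of M. Then B is an RD*-submodule of M if and only if B/A is an RD*-submodule of M/A. -/

import Mathlib

open Cardinal

universe u v

variable {R : Type u} [CommRing R] [IsDomain R]
variable {M : Type v} [AddCommGroup M] [Module R M]

/-- `A` is a relatively divisible (RD) submodule of `M`. -/
def IsRD (A : Submodule R M) : Prop :=
  ∀ (r : R) (m : M), r • m ∈ A → ∃ a ∈ A, r • a = r • m

/-- `A` is relatively divisible within the submodule `N` of `M`. -/
def IsRDWithin (A N : Submodule R M) : Prop :=
  A ≤ N ∧ ∀ (r : R) (m : M), m ∈ N → r • m ∈ A → ∃ a ∈ A, r • a = r • m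

/-- `A` is an RD*-submodule of `M`: RD, and every finite rank submodule of `M ⧸ A`
has a countable rank preimage. -/
def IsRDStar (A : Submodule R M) : Prop :=
  IsRD A ∧ ∀ Q : Submodule R (M ⧸ A), Module.rank R ↥Q < ℵ₀ →
    ∃ C : Submodule R M, Module.rank R ↥C ≤ ℵ₀ ∧ C.map A.mkQ = Q

/-- `A` is an RD*-submodule of the submodule `N` of `M`. -/
def IsRDStarWithin (A N : Submodule R M) : Prop :=
  IsRDWithin A N ∧ ∀ Q : Submodule R (M ⧸ A), Q ≤ N.map A.mkQ →
    Module.rank R ↥Q < ℵ₀ →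
    ∃ C : Submodule R M, C ≤ N ∧ Module.rank R ↥C ≤ ℵ₀ ∧ C.map A.mkQ = Q

/-- `A` is a direct summand of `M`. -/
def IsSummand (A : Submodule R M) : Prop :=
  ∃ P : Submodule R M, A ⊓ P = ⊥ ∧ A ⊔ P = ⊤

/-- `A` is a direct summand of the submodule `N` of `M`. -/
def IsSummandWithin (A N : Submodule R M) : Prop :=
  A ≤ N ∧ ∃ P ≤ N, A ⊓ P = ⊥ ∧ A ⊔ P = N

/-- A G*(ℵ₀)-family of RD-submodules of `M`. -/
def IsGStarFamily (𝒢 : Set (Submodule R M)) : Prop :=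
  (∀ A ∈ 𝒢, IsRD A) ∧ (⊥ : Submodule R M) ∈ 𝒢 ∧ (⊤ : Submodule R M) ∈ 𝒢 ∧
  (∀ c ⊆ 𝒢, IsChain (· ≤ ·) c → c.Nonempty → sSup c ∈ 𝒢) ∧
  ∀ C ∈ 𝒢, ∀ X : Set M, X.Countable →
    ∃ B ∈ 𝒢, C ≤ B ∧ X ⊆ ↑B ∧ Module.rank R ↥(B.map C.mkQ) ≤ ℵ₀

/-- A G*(ℵ₀)-family of RD-submodules of the submodule `N` of `M`. -/
def IsGStarFamilyWithin (𝒢 : Set (Submodule R M)) (N : Submodule R M) : Prop :=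
  (∀ A ∈ 𝒢, IsRDWithin A N) ∧ (⊥ : Submodule R M) ∈ 𝒢 ∧ N ∈ 𝒢 ∧
  (∀ c ⊆ 𝒢, IsChain (· ≤ ·) c → c.Nonempty → sSup c ∈ 𝒢) ∧
  ∀ C ∈ 𝒢, ∀ X : Set M, X ⊆ ↑N → X.Countable →
    ∃ B ∈ 𝒢, C ≤ B ∧ X ⊆ ↑B ∧ Module.rank R ↥(B.map C.mkQ) ≤ ℵ₀

/-- `A` is ultra-balanced in `M`: an RD-submodule that is a direct summand of every
RD-submodule `C` of `M` containing `A` with `C/A` of finite rank. -/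
def IsUltraBalanced (A : Submodule R M) : Prop :=
  IsRD A ∧ ∀ C : Submodule R M, IsRD C → A ≤ C →
    Module.rank R ↥(C.map A.mkQ) < ℵ₀ →
    ∃ D ≤ C, A ⊓ D = ⊥ ∧ A ⊔ D = C

/-- `N` is a direct sum of submodules of countable rank. -/
def DSumCountableRank (R : Type u) [CommRing R] (N : Type v) [AddCommGroup N]
    [Module R N] : Prop :=
  ∃ (ι : Type v) (f : ι → Submodule R N), iSupIndep f ∧
    iSup f = ⊤ ∧ ∀ i, Module.rank R ↥(f i) ≤ ℵ₀

/-- `N` is finitely decomposable: a direct sum of finite rank submodules. -/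
def FinDecomp (R : Type u) [CommRing R] (N : Type v) [AddCommGroup N]
    [Module R N] : Prop :=
  ∃ (ι : Type v) (f : ι → Submodule R N), iSupIndep f ∧
    iSup f = ⊤ ∧ ∀ i, Module.rank R ↥(f i) < ℵ₀

/-- The smallest RD-submodule of `M` containing `Y`. -/
def rdClosure (Y : Set M) : Submodule R M :=
  sInf {N : Submodule R M | IsRD N ∧ Y ⊆ ↑N}

set_option linter.unusedSectionVars false

/-- Bound the rank by bounding cardinalities of linearly independent sets. -/
lemma rank_le_of_indep_card {c : Cardinal}
    (h : ∀ s : Set M, LinearIndependent R ((↑) : s → M) → #s ≤ c) :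
    Module.rank R M ≤ c := by
  rw [Module.rank_def]
  exact ciSup_le' fun ι => h ι.1 ι.2

/-- A linearly independent subset of a submodule has cardinality at most the rank. -/
lemma card_le_rank_of_indep_subset {p : Submodule R M} {s : Set M} (hs : s ⊆ (p : Set M))
    (h : LinearIndependent R ((↑) : s → M)) : #s ≤ Module.rank R p := by
  have h' : LinearIndependent R (fun x : s => (⟨x.1, hs x.2⟩ : p)) := by
    apply LinearIndependent.of_comp p.subtype
    exact h
  exact h'.cardinal_le_rank

/-- Scaling an independent family by nonzero scalars keeps it independent. -/
lemma linearIndependent_smul_of_ne_zero {ι : Type*} {v : ι → M}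
    (hv : LinearIndependent R v) (r : ι → R) (hr : ∀ i, r i ≠ 0) :
    LinearIndependent R fun i => r i • v i := by
  rw [linearIndependent_iff'] at hv ⊢
  intro s g hg i hi
  have h0 : ∑ j ∈ s, (g j * r j) • v j = 0 := by
    rw [← hg]
    exact Finset.sum_congr rfl fun j _ => mul_smul _ _ _
  have := hv s (fun j => g j * r j) h0 i hi
  rcases mul_eq_zero.mp this with h | h
  · exact h
  · exact absurd h (hr i)

/-- The rank of a countable supremum of countable-rank submodules is countable. -/
lemma rank_iSup_le_aleph0 (C : ℕ → Submodule R M)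
    (h : ∀ n, Module.rank R (C n) ≤ ℵ₀) :
    Module.rank R ↥(⨆ n, C n) ≤ ℵ₀ := by
  set D : ℕ →o Submodule R M := partialSups C with hDdef
  have hD : ∀ n, Module.rank R (D n) ≤ ℵ₀ := by
    intro n
    induction n with
    | zero => rw [hDdef, partialSups_zero]; exact h 0
    | succ n ih =>
      have : D (n+1) = D n ⊔ C (n+1) := partialSups_succ C n
      rw [this]
      refine (Submodule.rank_add_le_rank_add_rank _ _).trans ?_
      calc Module.rank R (D n) + Module.rank R (C (n+1)) ≤ ℵ₀ + ℵ₀ :=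
            add_le_add ih (h _)
        _ = ℵ₀ := Cardinal.aleph0_add_aleph0
  have hsup : (⨆ n, C n) = ⨆ n, D n := (iSup_partialSups_eq C).symm
  rw [hsup]
  set S := ⨆ n, D n with hS
  apply rank_le_of_indep_card
  intro s hs
  have hs' : LinearIndependent R fun x : s => ((x : ↥S) : M) :=
    hs.map' S.subtype (Submodule.ker_subtype S)
  set t : Set M := Set.range (fun x : s => ((x : ↥S) : M)) with ht
  have hinj : Function.Injective (fun x : s => ((x : ↥S) : M)) :=
    Subtype.val_injective.comp Subtype.val_injective
  have hcard : #s = #t := (Cardinal.mk_range_eq _ hinj).symm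
  have htind : LinearIndependent R ((↑) : t → M) := (linearIndepOn_id_range_iff hinj).mpr hs'
  have htsub : t ⊆ ⋃ n, (D n : Set M) := by
    rw [← Submodule.coe_iSup_of_chain D]
    rintro x ⟨y, rfl⟩
    exact (y : ↥S).2
  have htn : ∀ n, ((t ∩ (D n : Set M)) : Set M).Countable := by
    intro n
    have hle : #(↥(t ∩ (D n : Set M))) ≤ ℵ₀ :=
      (card_le_rank_of_indep_subset Set.inter_subset_right
        ((show LinearIndepOn R id t from htind).mono Set.inter_subset_left)).trans (hD n)
    exact Set.countable_coe_iff.mp (Cardinal.mk_le_aleph0_iff.mp hle)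
  have htc : t.Countable := by
    have : t = ⋃ n, (t ∩ (D n : Set M)) := by
      rw [← Set.inter_iUnion]
      exact (Set.inter_eq_left.mpr htsub).symm
    rw [this]
    exact Set.countable_iUnion htn
  rw [hcard]
  exact htc.le_aleph0



/-- The "relative purification": elements of `D` with a nonzero multiple in `span (f '' Iic n)`. -/
def purify (D : Submodule R M) (f : ℕ → M) (n : ℕ) : Submodule R M where
  carrier := {x | x ∈ D ∧ ∃ r : R, r ≠ 0 ∧ r • x ∈ Submodule.span R (f '' Set.Iic n)}
  zero_mem' := ⟨D.zero_mem, 1, one_ne_zero, by simp⟩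
  add_mem' := by
    rintro a b ⟨haD, r, hr, hra⟩ ⟨hbD, t, ht, htb⟩
    refine ⟨D.add_mem haD hbD, r * t, mul_ne_zero hr ht, ?_⟩
    have : (r * t) • (a + b) = t • (r • a) + r • (t • b) := by
      rw [smul_add, smul_smul, smul_smul, mul_comm t r]
    rw [this]
    exact Submodule.add_mem _ (Submodule.smul_mem _ _ hra) (Submodule.smul_mem _ _ htb)
  smul_mem' := by
    rintro c a ⟨haD, r, hr, hra⟩
    refine ⟨D.smul_mem c haD, r, hr, ?_⟩
    rw [smul_comm]
    exact Submodule.smul_mem _ c hra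

lemma purify_le (D : Submodule R M) (f : ℕ → M) (n : ℕ) : purify D f n ≤ D :=
  fun _ hx => hx.1

lemma purify_rank_lt (D : Submodule R M) (f : ℕ → M) (n : ℕ) :
    Module.rank R ↥(purify D f n) < ℵ₀ := by
  classical
  have hle : Module.rank R ↥(purify D f n) ≤ (n + 1 : ℕ) := by
    apply rank_le
    intro s hs
    -- scale each element into the span
    set Sn := Submodule.span R (f '' Set.Iic n) with hSn
    have hchoice : ∀ x : ↥(purify D f n), ∃ r : R, r ≠ 0 ∧ r • (x : M) ∈ Sn :=
      fun x => x.2.2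
    choose r hr hrmem using hchoice
    have hs1 : LinearIndependent R fun x : s => ((x : ↥(purify D f n)) : M) :=
      hs.map' (purify D f n).subtype (Submodule.ker_subtype _)
    have hs2 : LinearIndependent R fun x : s => r x • ((x : ↥(purify D f n)) : M) :=
      linearIndependent_smul_of_ne_zero hs1 _ (fun i => hr _)
    have hs3 : LinearIndependent R fun x : s => (⟨r x • ((x : ↥(purify D f n)) : M),
        hrmem _⟩ : ↥Sn) := by
      apply LinearIndependent.of_comp Sn.subtype
      exact hs2
    have hcard : (#(↥(s : Set ↥(purify D f n))) : Cardinal) ≤ Module.rank R ↥Sn :=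
      hs3.cardinal_le_rank
    have hrank : Module.rank R ↥Sn ≤ (n + 1 : ℕ) := by
      have himg : f '' Set.Iic n = (((Finset.Iic n).image f : Finset M) : Set M) := by
        rw [Finset.coe_image, Finset.coe_Iic]
      rw [hSn, himg]
      refine (rank_span_le _).trans ?_
      rw [Finset.coe_sort_coe, Cardinal.mk_coe_finset]
      have : ((Finset.Iic n).image f).card ≤ n + 1 := by
        refine (Finset.card_image_le).trans ?_
        simp [Nat.card_Iic]
      exact_mod_cast this
    have hfin := hcard.trans hrank
    rw [Finset.coe_sort_coe, Cardinal.mk_coe_finset] at hfin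
    exact_mod_cast hfin
  exact hle.trans_lt (Cardinal.nat_lt_aleph0 _)

lemma purify_iSup (D : Submodule R M) {T : Set M} (f : ℕ → M)
    (hT : Submodule.span R T = Submodule.span R (Set.range f))
    (key : ∀ d ∈ D, ∃ a : R, a ≠ 0 ∧ a • d ∈ Submodule.span R T) :
    (⨆ n, purify D f n) = D := by
  classical
  apply le_antisymm
  · exact iSup_le fun n => purify_le D f n
  · intro d hd
    obtain ⟨a, ha, hmem⟩ := key d hd
    rw [hT] at hmem
    obtain ⟨t, htsub, htmem⟩ := Submodule.mem_span_finite_of_mem_span hmem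
    have hidx : ∀ y ∈ t, ∃ k : ℕ, f k = y := fun y hy => htsub hy
    choose g hg using hidx
    set n := t.attach.sup (fun y => g y.1 y.2) with hn
    have htsub' : (t : Set M) ⊆ f '' Set.Iic n := by
      intro y hy
      exact ⟨g y hy, Set.mem_Iic.mpr (Finset.le_sup (f := fun y : ↥t => g y.1 y.2) (Finset.mem_attach t ⟨y, hy⟩)), hg y hy⟩
    have : d ∈ purify D f n :=
      ⟨hd, a, ha, Submodule.span_mono htsub' htmem⟩
    exact Submodule.mem_iSup_of_mem n this

/-- Any countable-rank submodule of `M ⧸ A` lifts to a countable-rank submodule of `M`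
when `A` is RD*. -/
lemma exists_lift_of_rank_le_aleph0 {A : Submodule R M} (hA : IsRDStar A)
    (D : Submodule R (M ⧸ A)) (hD : Module.rank R ↥D ≤ ℵ₀) :
    ∃ C : Submodule R M, Module.rank R ↥C ≤ ℵ₀ ∧ C.map A.mkQ = D := by
  classical
  obtain ⟨I, hIind, hImax⟩ := exists_maximal_linearIndepOn R (fun d : ↥D => (d : M ⧸ A))
  have hIcard : #↥I ≤ ℵ₀ := by
    have hI2 : LinearIndependent R (fun x : I => (x : ↥D)) := by
      apply LinearIndependent.of_comp D.subtype
      exact hIind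
    exact hI2.cardinal_le_rank.trans hD
  set T : Set (M ⧸ A) := Subtype.val '' I with hTdef
  have hTc : (insert (0 : M ⧸ A) T).Countable := by
    refine Set.Countable.insert 0 ?_
    exact Set.Countable.image (Set.countable_coe_iff.mp (Cardinal.mk_le_aleph0_iff.mp hIcard)) _
  obtain ⟨f, hf⟩ := hTc.exists_eq_range (Set.insert_nonempty _ _)
  have hspan : Submodule.span R T = Submodule.span R (Set.range f) := by
    rw [← hf, Submodule.span_insert_zero]
  have key : ∀ d ∈ D, ∃ a : R, a ≠ 0 ∧ a • d ∈ Submodule.span R T := by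
    intro d hd
    by_cases hdI : (⟨d, hd⟩ : ↥D) ∈ I
    · exact ⟨1, one_ne_zero, by
        rw [one_smul]
        exact Submodule.subset_span ⟨⟨d, hd⟩, hdI, rfl⟩⟩
    · obtain ⟨a, ha, hmem⟩ := hImax ⟨d, hd⟩ hdI
      exact ⟨a, ha, by
        convert hmem using 2⟩
  have hsup := purify_iSup D f hspan key
  have hrank : ∀ n, Module.rank R ↥(purify D f n) < ℵ₀ := purify_rank_lt D f
  have hchoice : ∀ n : ℕ, ∃ C : Submodule R M, Module.rank R ↥C ≤ ℵ₀ ∧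
      C.map A.mkQ = purify D f n := fun n => hA.2 _ (hrank n)
  choose C hC1 hC2 using hchoice
  refine ⟨⨆ n, C n, rank_iSup_le_aleph0 C hC1, ?_⟩
  rw [Submodule.map_iSup]
  simp only [hC2]
  exact hsup

lemma rank_map_linearEquiv {N P : Type v} [AddCommGroup N] [Module R N]
    [AddCommGroup P] [Module R P] (σ : N ≃ₗ[R] P) (Q : Submodule R N) :
    Module.rank R ↥(Q.map (σ : N →ₗ[R] P)) = Module.rank R ↥Q :=
  (LinearEquiv.rank_eq (Submodule.equivMapOfInjective σ.toLinearMap σ.injective Q)).symm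

lemma map_linearEquiv_symm_map {N P : Type*} [AddCommGroup N] [Module R N]
    [AddCommGroup P] [Module R P] (σ : N ≃ₗ[R] P) (Q : Submodule R N) :
    (Q.map (σ : N →ₗ[R] P)).map (σ.symm : P →ₗ[R] N) = Q := by
  rw [← Submodule.map_comp]
  convert Submodule.map_id Q
  ext x
  simp

lemma map_linearEquiv_map_symm {N P : Type*} [AddCommGroup N] [Module R N]
    [AddCommGroup P] [Module R P] (σ : N ≃ₗ[R] P) (Q : Submodule R P) :
    (Q.map (σ.symm : P →ₗ[R] N)).map (σ : N →ₗ[R] P) = Q := by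
  rw [← Submodule.map_comp]
  convert Submodule.map_id Q
  ext x
  simp


/-- With `A` RD* in `M` and `A ≤ B`, `B` is RD* in `M` iff `B/A` is RD* in `M/A`. -/
theorem rdStar_iff_quotient_rdStar [NoZeroSMulDivisors R M] (A B : Submodule R M)
    (hAB : A ≤ B) (hA : IsRDStar A) : IsRDStar B ↔ IsRDStar (B.map A.mkQ) := by
  set B' := B.map A.mkQ with hB'def
  set e := Submodule.quotientQuotientEquivQuotient A B hAB with hedef
  have hcomm : ∀ x : M, e (B'.mkQ (A.mkQ x)) = B.mkQ x := by
    intro x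
    simp [hedef, Submodule.mkQ_apply, Submodule.quotientQuotientEquivQuotient]
  have hcomp : B'.mkQ ∘ₗ A.mkQ = (e.symm : (M ⧸ B) →ₗ[R] ((M ⧸ A) ⧸ B')) ∘ₗ B.mkQ := by
    ext x
    exact ((LinearEquiv.symm_apply_eq e).mpr (hcomm x).symm).symm
  have hmaps : ∀ C : Submodule R M,
      (C.map A.mkQ).map B'.mkQ = (C.map B.mkQ).map (e.symm : (M ⧸ B) →ₗ[R] _) := by
    intro C
    rw [← Submodule.map_comp, hcomp, Submodule.map_comp]
  constructor
  · rintro ⟨hBrd, hBstar⟩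
    constructor
    · -- B' is RD in M ⧸ A
      intro r y hy
      obtain ⟨m, rfl⟩ := A.mkQ_surjective y
      have hy' : A.mkQ (r • m) ∈ B' := by rwa [map_smul]
      have hrm : r • m ∈ B := by
        obtain ⟨b, hbB, hbe⟩ := hy'
        have hsub : b - r • m ∈ A := (Submodule.Quotient.eq A).mp hbe
        have : r • m = b - (b - r • m) := by abel
        rw [this]
        exact B.sub_mem hbB (hAB hsub)
      obtain ⟨b, hbB, hbe⟩ := hBrd r m hrm
      exact ⟨A.mkQ b, ⟨b, hbB, rfl⟩, by rw [← map_smul, ← map_smul, hbe]⟩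
    · intro Q hQ
      set Q0 := Q.map (e : ((M ⧸ A) ⧸ B') →ₗ[R] M ⧸ B) with hQ0def
      have hQ0rank : Module.rank R ↥Q0 = Module.rank R ↥Q := rank_map_linearEquiv e Q
      obtain ⟨C, hC1, hC2⟩ := hBstar Q0 (by rwa [hQ0rank])
      refine ⟨C.map A.mkQ, (rank_map_le _ _).trans hC1, ?_⟩
      rw [hmaps C, hC2, hQ0def, map_linearEquiv_symm_map]
  · rintro ⟨hB'rd, hB'star⟩
    constructor
    · -- B is RD in M
      intro r m hrm
      have hy : r • A.mkQ m ∈ B' := ⟨r • m, hrm, by rw [map_smul]⟩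
      obtain ⟨y, hyB', hye⟩ := hB'rd r (A.mkQ m) hy
      obtain ⟨b, hbB, rfl⟩ := hyB'
      have hba : r • (b - m) ∈ A := by
        have h0 : A.mkQ (r • (b - m)) = 0 := by
          rw [map_smul, map_sub, smul_sub, hye]
          abel
        exact (Submodule.Quotient.mk_eq_zero A).mp h0
      obtain ⟨a, haA, hae⟩ := hA.1 r (b - m) hba
      refine ⟨b - a, B.sub_mem hbB (hAB haA), ?_⟩
      rw [smul_sub, hae, smul_sub]
      abel
    · intro Q hQ
      set Q' := Q.map (e.symm : (M ⧸ B) →ₗ[R] ((M ⧸ A) ⧸ B')) with hQ'def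
      have hQ'rank : Module.rank R ↥Q' = Module.rank R ↥Q := rank_map_linearEquiv e.symm Q
      obtain ⟨C', hC'1, hC'2⟩ := hB'star Q' (by rwa [hQ'rank])
      obtain ⟨C, hCrank, hCmap⟩ := exists_lift_of_rank_le_aleph0 hA C' hC'1
      refine ⟨C, hCrank, ?_⟩
      have h1 := hmaps C
      rw [hCmap, hC'2, hQ'def] at h1
      have h2 := congrArg (Submodule.map (e : ((M ⧸ A) ⧸ B') →ₗ[R] M ⧸ B)) h1
      rw [map_linearEquiv_map_symm e Q, map_linearEquiv_map_symm e (Submodule.map B.mkQ C)] at h2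
      exact h2.symm
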